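/- arXiv:1812.03617 — 3 statements merged into one kernel-verified Lean document; each statement's English description precedes it below -/
import Mathlib

section
/- Let H be a real Hilbert space, a a continuous symmetric bilinear form with finite-dimensional kernel Ker(a) = {w : a(w,v) = 0 for all v}, and suppose the quadratic form A(u) = a(u,u) is coercive on the orthogonal complement of Ker(a), i.e. A(u) ≥ γ‖u‖² for all u ⟂ Ker(a), with γ > 0. If V is a closed subspace of H with V ∩ Ker(a) = {0} and β(V, Ker(a)) > 0, where β(V,W) = √(1 - α(V,W)²) and α(V,W) = sup{⟨v,w⟩ : v ∈ V, w ∈ W, ‖v‖ = ‖w‖ = 1}, then A is coercive on V with constant γ·β(V, Ker(a))². -/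
/-- Coercivity transfer: if `A` is coercive on the orthogonal complement of the
finite-dimensional kernel of `a`, then `A` is coercive on any closed subspace `V`
meeting the kernel trivially, with constant `γ · β(V, Ker a)²`. -/
theorem coercive_on_transversal_subspace
    {H : Type*} [NormedAddCommGroup H] [InnerProductSpace ℝ H] [CompleteSpace H]
    (a : H →ₗ[ℝ] H →ₗ[ℝ] ℝ)
    (hsymm : ∀ u v : H, a u v = a v u)
    (hcont : Continuous fun p : H × H => a p.1 p.2)
    (K : Submodule ℝ H) (hK : ∀ w : H, w ∈ K ↔ ∀ v : H, a w v = 0)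
    [FiniteDimensional ℝ K]
    (γ : ℝ) (hγ : 0 < γ)
    (hcoer : ∀ u ∈ Kᗮ, γ * ‖u‖ ^ 2 ≤ a u u)
    (V : Submodule ℝ H) (hVclosed : IsClosed (V : Set H)) (hVK : V ⊓ K = ⊥)
    (α : ℝ)
    (hα : α = sSup {r : ℝ | ∃ v ∈ V, ∃ w ∈ K, ‖v‖ = 1 ∧ ‖w‖ = 1 ∧ r = (inner ℝ v w : ℝ)})
    (β : ℝ) (hβ : β = Real.sqrt (1 - α ^ 2)) (hβpos : 0 < β) :
    ∀ u ∈ V, γ * β ^ 2 * ‖u‖ ^ 2 ≤ a u u := by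
  intro u hu
  have h1 : (0 : ℝ) ≤ 1 - α ^ 2 := by
    by_contra h
    push_neg at h
    rw [hβ, Real.sqrt_eq_zero_of_nonpos h.le] at hβpos
    exact lt_irrefl 0 hβpos
  have hβ2 : β ^ 2 = 1 - α ^ 2 := by rw [hβ, Real.sq_sqrt h1]
  obtain ⟨w, hw, p, hp, hupw⟩ := (Submodule.exists_add_mem_mem_orthogonal u : ∃ y ∈ K, ∃ z ∈ Kᗮ, u = y + z)
  have hwp0 : (inner ℝ w p : ℝ) = 0 := (Submodule.mem_orthogonal K p).mp hp w hw
  -- a u u = a p p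
  have haw : ∀ v : H, a w v = 0 := (hK w).mp hw
  have hauu : a u u = a p p := by
    rw [hupw]
    simp [map_add, haw, hsymm p w, haw w]
  -- Pythagoras
  have hpyth : ‖u‖ ^ 2 = ‖w‖ ^ 2 + ‖p‖ ^ 2 := by
    rw [hupw, norm_add_sq_real, hwp0]; ring
  -- ‖w‖² ≤ α² ‖u‖²
  have hwle : ‖w‖ ^ 2 ≤ α ^ 2 * ‖u‖ ^ 2 := by
    rcases eq_or_ne w 0 with hw0 | hw0
    · simp [hw0]
      positivity
    · have hwpos : 0 < ‖w‖ := norm_pos_iff.mpr hw0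
      have hupos : 0 < ‖u‖ := norm_pos_iff.mpr (fun h0 => by
        simp [h0] at hpyth
        nlinarith [sq_nonneg ‖p‖])
      set S := {r : ℝ | ∃ v ∈ V, ∃ w ∈ K, ‖v‖ = 1 ∧ ‖w‖ = 1 ∧ r = (inner ℝ v w : ℝ)}
      have hbdd : BddAbove S := by
        refine ⟨1, fun r hr => ?_⟩
        obtain ⟨v, hv, w', hw', hv1, hw1, hr⟩ := hr
        calc r = (inner ℝ v w' : ℝ) := hr
          _ ≤ ‖v‖ * ‖w'‖ := real_inner_le_norm v w'
          _ = 1 := by rw [hv1, hw1]; ring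
      have hpw0 : (inner ℝ p w : ℝ) = 0 := by rw [real_inner_comm]; exact hwp0
      have hiuw : (inner ℝ u w : ℝ) = ‖w‖ ^ 2 := by
        rw [hupw, inner_add_left, hpw0, real_inner_self_eq_norm_sq]
        ring
      have hmem : ‖w‖ / ‖u‖ ∈ S := by
        refine ⟨‖u‖⁻¹ • u, V.smul_mem _ hu, ‖w‖⁻¹ • w, K.smul_mem _ hw, ?_, ?_, ?_⟩
        · simp [norm_smul, abs_of_pos (inv_pos.mpr hupos), inv_mul_cancel₀ hupos.ne']
        · simp [norm_smul, abs_of_pos (inv_pos.mpr hwpos), inv_mul_cancel₀ hwpos.ne']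
        · rw [real_inner_smul_left, real_inner_smul_right, hiuw]
          field_simp
      have hle : ‖w‖ / ‖u‖ ≤ α := hα ▸ le_csSup hbdd hmem
      have hαpos : 0 < α := lt_of_lt_of_le (by positivity) hle
      have : ‖w‖ ≤ α * ‖u‖ := by
        rw [div_le_iff₀ hupos] at hle
        linarith
      nlinarith
  have hcp := hcoer p hp
  rw [hauu]
  have h3 : β ^ 2 * ‖u‖ ^ 2 ≤ ‖p‖ ^ 2 := by rw [hβ2]; nlinarith
  calc γ * β ^ 2 * ‖u‖ ^ 2 = γ * (β ^ 2 * ‖u‖ ^ 2) := by ring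
    _ ≤ γ * ‖p‖ ^ 2 := mul_le_mul_of_nonneg_left h3 hγ.le
    _ ≤ a p p := hcp
end

section
/- Let H be a real Hilbert space with symmetric bilinear forms a, b, c, where c has nonnegative quadratic form. For t ∈ ℝ set bᵗ = b - t·c and let K = Ker(c). Suppose (λₙ, uₙ) are eigenpairs: a(uₙ,v) = λₙ·bᵗⁿ(uₙ,v) for all v ∈ H, with tₙ → ∞, uₙ ⇀ u weakly, λₙ → λ with λ finite and bounded away from 0 (so 1/λₙ bounded), and a, b are such that a(uₙ,v) and b(uₙ,v) are bounded in n for each fixed v (e.g. a continuous, b weakly continuous). Then c(u, v) = 0 for all v ∈ H, i.e. the weak limit u lies in K = Ker(c). -/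
/-- Weak convergence in a real Hilbert space. -/
def WeakTendsto {H : Type*} [NormedAddCommGroup H] [InnerProductSpace ℝ H]
    (u : ℕ → H) (l : H) : Prop :=
  ∀ w : H, Filter.Tendsto (fun n => (inner ℝ (u n) w : ℝ)) Filter.atTop (nhds (inner ℝ l w))

/-- The draining estimate: if `(λₙ, uₙ)` are eigenpairs of `(a, b - tₙ c)` with
`tₙ → ∞`, `uₙ ⇀ u` weakly and `λₙ → λ ≠ 0`, then the weak limit `u` lies in
`Ker c`, i.e. `c(u,v) = 0` for all `v`. -/
theorem weak_limit_in_kernel_of_c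
    {H : Type*} [NormedAddCommGroup H] [InnerProductSpace ℝ H] [CompleteSpace H]
    (a b c : H →ₗ[ℝ] H →ₗ[ℝ] ℝ)
    (hasymm : ∀ u v : H, a u v = a v u)
    (hbsymm : ∀ u v : H, b u v = b v u)
    (hcsymm : ∀ u v : H, c u v = c v u)
    (hcnonneg : ∀ w : H, 0 ≤ c w w)
    (hacont : Continuous fun p : H × H => a p.1 p.2)
    (hbweak : ∀ (x : ℕ → H) (xl : H) (y : ℕ → H) (yl : H),
      WeakTendsto x xl → WeakTendsto y yl →
      Filter.Tendsto (fun n => b (x n) (y n)) Filter.atTop (nhds (b xl yl)))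
    (hcweak : ∀ (x : ℕ → H) (xl : H) (y : ℕ → H) (yl : H),
      WeakTendsto x xl → WeakTendsto y yl →
      Filter.Tendsto (fun n => c (x n) (y n)) Filter.atTop (nhds (c xl yl)))
    (t : ℕ → ℝ) (ht : Filter.Tendsto t Filter.atTop Filter.atTop)
    (lam : ℕ → ℝ) (u : ℕ → H) (laml : ℝ) (ul : H)
    (heig : ∀ n, ∀ v : H, a (u n) v = lam n * (b (u n) v - t n * c (u n) v))
    (hlam : Filter.Tendsto lam Filter.atTop (nhds laml))
    (hlamne : laml ≠ 0) (hlamn : ∀ n, lam n ≠ 0)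
    (huw : WeakTendsto u ul) :
    ∀ v : H, c ul v = 0 := by

  intro v
  -- ‖u n‖ is bounded (Banach–Steinhaus)
  obtain ⟨C, hC⟩ : ∃ C, ∀ n, ‖u n‖ ≤ C := by
    have h := banach_steinhaus (𝕜 := ℝ) (𝕜₂ := ℝ)
      (g := fun n : ℕ => (innerSL ℝ (u n) : H →L[ℝ] ℝ)) ?_
    · obtain ⟨C, hC⟩ := h
      exact ⟨C, fun n => by simpa [innerSL_apply_norm] using hC n⟩
    · intro x
      have hb := ((huw x).norm).bddAbove_range
      obtain ⟨M, hM⟩ := hb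
      exact ⟨M, fun n => by
        simpa using hM (Set.mem_range_self (f := fun n => ‖(inner ℝ (u n) x : ℝ)‖) n)⟩
  -- bound on a (u n) v
  have hφcont : Continuous fun w : H => a w v :=
    hacont.comp (continuous_id.prodMk continuous_const)
  let φ : H →L[ℝ] ℝ := ⟨a.flip v, hφcont⟩
  have haB : ∀ n, |a (u n) v| ≤ ‖φ‖ * C := by
    intro n
    have h1 : |a (u n) v| = ‖φ (u n)‖ := rfl
    rw [h1]
    calc ‖φ (u n)‖ ≤ ‖φ‖ * ‖u n‖ := φ.le_opNorm _
      _ ≤ ‖φ‖ * C := by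
        have : (0:ℝ) ≤ ‖φ‖ := norm_nonneg _
        nlinarith [hC n, norm_nonneg (u n)]
  -- bound on (lam n)⁻¹
  obtain ⟨L, hL⟩ : ∃ L, ∀ n, |(lam n)⁻¹| ≤ L := by
    have := ((hlam.inv₀ hlamne).norm).bddAbove_range
    obtain ⟨L, hL⟩ := this
    exact ⟨L, fun n => hL (Set.mem_range_self (f := fun n => ‖(lam n)⁻¹‖) n)⟩
  -- bound on b (u n) v
  have hvw : WeakTendsto (fun _ : ℕ => v) v := fun w => tendsto_const_nhds
  have hbconv := hbweak u ul (fun _ => v) v huw hvw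
  obtain ⟨B, hB⟩ : ∃ B, ∀ n, |b (u n) v| ≤ B := by
    have := (hbconv.norm).bddAbove_range
    obtain ⟨B, hB⟩ := this
    exact ⟨B, fun n => hB (Set.mem_range_self (f := fun n => ‖b (u n) v‖) n)⟩
  set M : ℝ := B + ‖φ‖ * C * L with hM
  -- key identity: t n * c (u n) v = b (u n) v - a (u n) v / lam n
  have hkey : ∀ n, t n * c (u n) v = b (u n) v - a (u n) v / lam n := by
    intro n
    have h := heig n v
    field_simp [hlamn n] at h ⊢
    linarith
  -- c (u n) v → 0
  have hc0 : Filter.Tendsto (fun n => c (u n) v) Filter.atTop (nhds 0) := by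
    refine squeeze_zero_norm' (a := fun n => M / t n) ?_ ?_
    · filter_upwards [ht.eventually_gt_atTop 0] with n htn
      have hkn := hkey n
      have hcn : c (u n) v = (b (u n) v - a (u n) v / lam n) / t n := by
        field_simp at hkn ⊢
        linarith
      rw [hcn, Real.norm_eq_abs, abs_div, abs_of_pos htn]
      gcongr
      calc |b (u n) v - a (u n) v / lam n|
          ≤ |b (u n) v| + |a (u n) v / lam n| := abs_sub _ _
        _ ≤ B + ‖φ‖ * C * L := by
            have h1 := hB n
            have h2 : |a (u n) v / lam n| ≤ ‖φ‖ * C * L := by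
              rw [div_eq_mul_inv, abs_mul]
              have ha := haB n
              have hl := hL n
              have h0 : (0:ℝ) ≤ |a (u n) v| := abs_nonneg _
              have h0' : (0:ℝ) ≤ |(lam n)⁻¹| := abs_nonneg _
              nlinarith
            linarith
    · simpa using Filter.Tendsto.div_atTop (tendsto_const_nhds (x := M)) ht
  have hcconv := hcweak u ul (fun _ => v) v huw hvw
  exact tendsto_nhds_unique hcconv hc0
end

section
/- Let H be a real Hilbert space with continuous coercive symmetric bilinear form a, and b a weakly continuous symmetric bilinear form. Let U₊ and U₋ be the closed spans of eigenvectors of a(u,·) = λ b(u,·) with positive and negative eigenvalues respectively, and assume the quadratic form B(u) = b(u,u) satisfies B ≤ 0 on the a-orthogonal complement of U₊ and B ≥ 0 on the a-orthogonal complement of U₋. Then every u in the a-orthogonal complement of U₊ ⊕ U₋ satisfies b(u,v) = 0 for all v ∈ H; that is, (U₊ ⊕_a U₋)^{⟂_a} ⊆ Ker(b). -/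
open InnerProductSpace

lemma bilin_bound_of_continuous {H : Type*} [NormedAddCommGroup H] [NormedSpace ℝ H]
    (f : H →ₗ[ℝ] H →ₗ[ℝ] ℝ) (hf : Continuous fun p : H × H => f p.1 p.2) :
    ∃ C : ℝ, 0 ≤ C ∧ ∀ x y : H, ‖f x y‖ ≤ C * ‖x‖ * ‖y‖ := by
  have h00 : f (0 : H) (0 : H) = 0 := by simp
  have hca : ContinuousAt (fun p : H × H => f p.1 p.2) ((0, 0) : H × H) := hf.continuousAt
  rw [Metric.continuousAt_iff] at hca
  obtain ⟨δ, hδ, hball⟩ := hca 1 one_pos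
  refine ⟨4 / δ ^ 2, by positivity, fun x y => ?_⟩
  rcases eq_or_ne x 0 with rfl | hx
  · simp
  rcases eq_or_ne y 0 with rfl | hy
  · simp
  have hnx : (0:ℝ) < ‖x‖ := norm_pos_iff.mpr hx
  have hny : (0:ℝ) < ‖y‖ := norm_pos_iff.mpr hy
  set c : ℝ := (δ / 2) / ‖x‖ with hc
  set d : ℝ := (δ / 2) / ‖y‖ with hd
  have hcpos : 0 < c := by positivity
  have hdpos : 0 < d := by positivity
  have hdist : dist ((c • x, d • y) : H × H) ((0, 0) : H × H) < δ := by
    rw [Prod.dist_eq]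
    apply max_lt <;> rw [dist_zero_right, norm_smul] <;>
      simp only [Real.norm_eq_abs, abs_of_pos hcpos, abs_of_pos hdpos, hc, hd, abs_div, abs_norm, abs_of_pos hδ, abs_two] <;>
      rw [div_mul_cancel₀] <;> first | linarith | positivity
  have := hball hdist
  rw [h00, dist_zero_right] at this
  have hval : f (c • x) (d • y) = c * d * f x y := by
    simp [map_smul, smul_eq_mul]; ring
  rw [hval] at this
  have habs : c * d * ‖f x y‖ < 1 := by
    have : ‖c * d * f x y‖ < 1 := this
    rwa [norm_mul, norm_mul, Real.norm_eq_abs c, Real.norm_eq_abs d,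
      abs_of_pos hcpos, abs_of_pos hdpos] at this
  have hcd : c * d = (δ / 2) ^ 2 / (‖x‖ * ‖y‖) := by
    rw [hc, hd]; field_simp
  rw [hcd] at habs
  rw [div_mul_eq_mul_div, div_lt_one (by positivity)] at habs
  have h4 : ‖f x y‖ ≤ (‖x‖ * ‖y‖) / ((δ/2)^2) := by
    rw [le_div_iff₀ (by positivity)]
    nlinarith
  calc ‖f x y‖ ≤ (‖x‖ * ‖y‖) / ((δ/2)^2) := h4
    _ = 4 / δ ^ 2 * ‖x‖ * ‖y‖ := by field_simp; ring

/-- The `a`-orthogonal complement of `U₊ ⊕ U₋` (the closed spans of the eigenvectors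
with positive and negative eigenvalues) is contained in the kernel of `b`. -/
theorem complement_of_eigenspaces_subset_kernel
    {H : Type*} [NormedAddCommGroup H] [InnerProductSpace ℝ H] [CompleteSpace H]
    (a b : H →ₗ[ℝ] H →ₗ[ℝ] ℝ)
    (hasymm : ∀ u v : H, a u v = a v u)
    (hbsymm : ∀ u v : H, b u v = b v u)
    (hacont : Continuous fun p : H × H => a p.1 p.2)
    (γ : ℝ) (hγ : 0 < γ) (hcoer : ∀ u : H, γ * ‖u‖ ^ 2 ≤ a u u)
    (hbcont : Continuous fun p : H × H => b p.1 p.2)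
    (Eplus Eminus : Set H)
    (hEp : ∀ e ∈ Eplus, e ≠ 0 ∧ ∃ l : ℝ, 0 < l ∧ ∀ v : H, a e v = l * b e v)
    (hEm : ∀ e ∈ Eminus, e ≠ 0 ∧ ∃ l : ℝ, l < 0 ∧ ∀ v : H, a e v = l * b e v)
    (Up Um : Submodule ℝ H)
    (hUp : Up = (Submodule.span ℝ Eplus).topologicalClosure)
    (hUm : Um = (Submodule.span ℝ Eminus).topologicalClosure)
    (hBneg : ∀ u : H, (∀ v ∈ Up, a u v = 0) → b u u ≤ 0)
    (hBpos : ∀ u : H, (∀ v ∈ Um, a u v = 0) → 0 ≤ b u u) :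
    ∀ u : H, (∀ v ∈ Up ⊔ Um, a u v = 0) → ∀ v : H, b u v = 0 := by
  intro u hu v
  obtain ⟨C, hC0, hC⟩ := bilin_bound_of_continuous a hacont
  let A : H →L[ℝ] H →L[ℝ] ℝ := LinearMap.mkContinuous₂ a C hC
  set K : Submodule ℝ H := (Up ⊔ Um).topologicalClosure with hK
  have hKclosed : IsClosed (K : Set H) := Submodule.isClosed_topologicalClosure _
  haveI : CompleteSpace K := hKclosed.completeSpace_coe
  let S : K →L[ℝ] H := K.subtypeL
  let BK : K →L[ℝ] K →L[ℝ] ℝ := (A.comp S).flip.comp S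
  have hBK : ∀ x y : K, BK x y = a (y : H) (x : H) := fun _ _ => rfl
  have coer : IsCoercive BK := by
    refine ⟨γ, hγ, fun k => ?_⟩
    calc γ * ‖k‖ * ‖k‖ = γ * ‖(k : H)‖ ^ 2 := by rw [Submodule.norm_coe]; ring
      _ ≤ a (k : H) (k : H) := hcoer _
      _ = BK k k := (hBK k k).symm
  -- decompose v = w + p with p ∈ K, w ⟂_a K
  let f : K →L[ℝ] ℝ := (A v).comp S
  let rf : K := (InnerProductSpace.toDual ℝ K).symm f
  let p : K := coer.continuousLinearEquivOfBilin.symm rf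
  have hpk : ∀ k : K, a (p : H) (k : H) = a v (k : H) := by
    intro k
    have h1 : ⟪coer.continuousLinearEquivOfBilin p, k⟫_ℝ = BK p k :=
      coer.continuousLinearEquivOfBilin_apply p k
    have h2 : coer.continuousLinearEquivOfBilin p = rf :=
      coer.continuousLinearEquivOfBilin.apply_symm_apply rf
    rw [h2] at h1
    have h3 : ⟪rf, k⟫_ℝ = f k := InnerProductSpace.toDual_symm_apply
    rw [h3] at h1
    have h4 : f k = a v (k : H) := rfl
    have h5 : BK p k = a (k : H) (p : H) := hBK p k
    rw [h4, h5] at h1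
    rw [hasymm]
    exact h1.symm
  set w : H := v - (p : H) with hw
  have hwK : ∀ x ∈ K, a w x = 0 := by
    intro x hx
    have h := hpk ⟨x, hx⟩
    simp only [hw, map_sub, LinearMap.sub_apply]
    simp only [Submodule.coe_mk] at h
    linarith
  have hsubK : Up ⊔ Um ≤ K := Submodule.le_topologicalClosure _
  have hwUpUm : ∀ x ∈ Up ⊔ Um, a w x = 0 := fun x hx => hwK x (hsubK hx)
  -- the quadratic form of b vanishes on the a-orthogonal complement of Up ⊔ Um
  have hquad : ∀ z : H, (∀ x ∈ Up ⊔ Um, a z x = 0) → b z z = 0 := by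
    intro z hz
    have h1 : b z z ≤ 0 := hBneg z fun x hx => hz x (Submodule.mem_sup_left hx)
    have h2 : 0 ≤ b z z := hBpos z fun x hx => hz x (Submodule.mem_sup_right hx)
    linarith
  have huu : b u u = 0 := hquad u hu
  have hww : b w w = 0 := hquad w hwUpUm
  have huw : b (u + w) (u + w) = 0 := by
    refine hquad _ fun x hx => ?_
    simp only [map_add, LinearMap.add_apply, hu x hx, hwUpUm x hx, add_zero]
  have hbuw : b u w = 0 := by
    have hexp : b (u + w) (u + w) = b u u + b u w + b w u + b w w := by
      simp only [map_add, LinearMap.add_apply]; ring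
    have hs : b w u = b u w := hbsymm w u
    rw [huu, hww, hs, huw] at hexp
    linarith
  -- b u vanishes on K
  have hcont_bu : Continuous fun x : H => b u x := hbcont.comp (continuous_const.prodMk continuous_id)
  have hker_closed : IsClosed ((LinearMap.ker (b u) : Submodule ℝ H) : Set H) := by
    have hset : ((LinearMap.ker (b u) : Submodule ℝ H) : Set H) = {x | b u x = 0} := by
      ext x; simp [LinearMap.mem_ker]
    rw [hset]
    exact isClosed_eq hcont_bu continuous_const
  have hEker : ∀ (E : Set H) (U : Submodule ℝ H),
      U = (Submodule.span ℝ E).topologicalClosure → U ≤ Up ⊔ Um →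
      (∀ e ∈ E, ∃ l : ℝ, l ≠ 0 ∧ ∀ v : H, a e v = l * b e v) →
      U ≤ LinearMap.ker (b u) := by
    intro E U hUdef hUle hE
    rw [hUdef]
    refine Submodule.topologicalClosure_minimal _ ?_ hker_closed
    rw [Submodule.span_le]
    intro e he
    obtain ⟨l, hl, heq⟩ := hE e he
    have heU : e ∈ Up ⊔ Um := by
      apply hUle
      rw [hUdef]
      exact Submodule.le_topologicalClosure _ (Submodule.subset_span he)
    have h2 : a u e = 0 := hu e heU
    have h3 : l * b e u = 0 := by rw [← heq u, hasymm e u, h2]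
    have h4 : b e u = 0 := by
      rcases mul_eq_zero.mp h3 with h | h
      · exact absurd h hl
      · exact h
    have h5 : b u e = 0 := by rw [hbsymm u e, h4]
    exact LinearMap.mem_ker.mpr h5
  have hUpker : Up ≤ LinearMap.ker (b u) :=
    hEker Eplus Up hUp le_sup_left fun e he =>
      let ⟨_, l, hl, heq⟩ := hEp e he
      ⟨l, ne_of_gt hl, heq⟩
  have hUmker : Um ≤ LinearMap.ker (b u) :=
    hEker Eminus Um hUm le_sup_right fun e he =>
      let ⟨_, l, hl, heq⟩ := hEm e he
      ⟨l, ne_of_lt hl, heq⟩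
  have hKker : K ≤ LinearMap.ker (b u) :=
    Submodule.topologicalClosure_minimal _ (sup_le hUpker hUmker) hker_closed
  have hbup : b u (p : H) = 0 := LinearMap.mem_ker.mp (hKker p.2)
  have hv : v = w + (p : H) := by rw [hw]; abel
  rw [hv, map_add, hbuw, hbup, add_zero]
end
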